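/- Let x : [t₀,∞) → ℝ^n be an absolutely continuous solution of ẋ(t) = −proj_{C_α(x(t),t)}(0) with C_α as the convex hull of normalized gradients ∇f_i/α(x(t),t), α ≥ α_min > 0. Then each function t ↦ f_i(x(t)) is non-increasing, and consequently for any s ≤ t, the sublevel set L(f, f(x(t))) := {y : f_i(y) ≤ f_i(x(t)) ∀i} is contained in L(f, f(x(s))). -/

import Mathlib

noncomputable section
open Metric Set

open scoped RealInnerProductSpace in
lemma min_norm_inner_nonneg {E : Type*} [NormedAddCommGroup E] [InnerProductSpace ℝ E]
    {K : Set E} (hK : Convex ℝ K) {p : E} (hp : p ∈ K)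
    (hmin : ∀ y ∈ K, ‖p‖ ≤ ‖y‖) : ∀ y ∈ K, 0 ≤ ⟪p, y⟫ := by
  intro y hy
  haveI : Nonempty K := ⟨⟨p, hp⟩⟩
  have h : ‖(0:E) - p‖ = ⨅ w : K, ‖(0:E) - w‖ := by
    refine le_antisymm (le_ciInf fun w => by simpa using hmin w w.2) ?_
    exact ciInf_le ⟨0, by rintro _ ⟨w, rfl⟩; exact norm_nonneg _⟩ (⟨p, hp⟩ : K)
  have := (norm_eq_iInf_iff_real_inner_le_zero hK hp).mp h y hy
  have h2 : ⟪p, y - p⟫ ≥ 0 := by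
    have : ⟪-p, y - p⟫ ≤ 0 := by simpa using this
    simpa [inner_neg_left] using this
  have h3 : ⟪p, y⟫ - ⟪p, p⟫ = ⟪p, y - p⟫ := by rw [inner_sub_right]
  nlinarith [real_inner_self_nonneg (x := p)]

/-- along the balanced gradient flow each objective is non-increasing,
and the sublevel sets `L(f, f(x(t)))` are nested. -/
theorem sublevel_monotone_MBGF {n m : ℕ} [NeZero m]
    (f : Fin m → EuclideanSpace ℝ (Fin n) → ℝ)
    (g : Fin m → EuclideanSpace ℝ (Fin n) → EuclideanSpace ℝ (Fin n))
    (hg : ∀ i u, HasGradientAt (f i) (g i u) u)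
    (t₀ αmin : ℝ) (hαmin : 0 < αmin)
    (α : EuclideanSpace ℝ (Fin n) → ℝ → ℝ) (hα : ∀ u t, αmin ≤ α u t)
    (x x' : ℝ → EuclideanSpace ℝ (Fin n))
    (hx : ∀ t ≥ t₀, HasDerivAt x (x' t) t)
    (hflow : ∀ t ≥ t₀, ∃ p : EuclideanSpace ℝ (Fin n),
      p ∈ convexHull ℝ (Set.range fun i => (α (x t) t)⁻¹ • g i (x t)) ∧
      (∀ y ∈ convexHull ℝ (Set.range fun i => (α (x t) t)⁻¹ • g i (x t)), ‖p‖ ≤ ‖y‖) ∧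
      x' t = -p) :
    (∀ i, AntitoneOn (fun t => f i (x t)) (Set.Ici t₀)) ∧
    (∀ s t, t₀ ≤ s → s ≤ t →
      {y | ∀ i, f i y ≤ f i (x t)} ⊆ {y | ∀ i, f i y ≤ f i (x s)}) := by
  have key : ∀ i, AntitoneOn (fun t => f i (x t)) (Set.Ici t₀) := by
    intro i
    have hd : ∀ t ∈ Set.Ici t₀,
        HasDerivAt (fun t => f i (x t)) (inner ℝ (g i (x t)) (x' t) : ℝ) t := by
      intro t ht
      have := ((hg i (x t)).hasFDerivAt).comp_hasDerivAt t (hx t ht)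
      simp at this; exact this
    have hnonpos : ∀ t ∈ Set.Ici t₀, (inner ℝ (g i (x t)) (x' t) : ℝ) ≤ 0 := by
      intro t ht
      obtain ⟨p, hpmem, hpmin, hx'⟩ := hflow t ht
      have hconv : Convex ℝ (convexHull ℝ
          (Set.range fun j => (α (x t) t)⁻¹ • g j (x t))) := convex_convexHull ℝ _
      have hmem : (α (x t) t)⁻¹ • g i (x t) ∈ convexHull ℝ
          (Set.range fun j => (α (x t) t)⁻¹ • g j (x t)) :=
        subset_convexHull ℝ _ ⟨i, rfl⟩
      have h0 : (0:ℝ) ≤ inner ℝ p ((α (x t) t)⁻¹ • g i (x t)) :=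
        min_norm_inner_nonneg hconv hpmem hpmin _ hmem
      have hαpos : 0 < α (x t) t := lt_of_lt_of_le hαmin (hα _ _)
      have h1 : (0:ℝ) ≤ inner ℝ p (g i (x t)) := by
        rw [real_inner_smul_right] at h0
        nlinarith [inv_pos.mpr hαpos]
      rw [hx', inner_neg_right, real_inner_comm]
      linarith
    have hcont : ContinuousOn (fun t => f i (x t)) (Set.Ici t₀) := fun t ht =>
      (hd t ht).continuousAt.continuousWithinAt
    have hdiff : DifferentiableOn ℝ (fun t => f i (x t)) (interior (Set.Ici t₀)) := by
      intro t ht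
      rw [interior_Ici] at ht
      exact ((hd t (Set.mem_Ici.mpr (le_of_lt ht))).differentiableAt).differentiableWithinAt
    refine antitoneOn_of_deriv_nonpos (convex_Ici t₀) hcont hdiff ?_
    intro t ht
    rw [interior_Ici] at ht
    rw [(hd t (Set.mem_Ici.mpr (le_of_lt ht))).deriv]
    exact hnonpos t (Set.mem_Ici.mpr (le_of_lt ht))
  refine ⟨key, fun s t hs hst y hy i => ?_⟩
  exact (hy i).trans (key i hs (hs.trans hst) hst)
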